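/- arXiv:math/0610956 — 2 statements merged into one kernel-verified Lean document; each statement's English description precedes it below -/
import Mathlib

section
/- (Rigidity of fast periodic orbits; the Wirtinger-inequality argument proved in the paper's Lemma 3.1, adapted from Hofer–Zehnder.) Let m ≥ 1, T > 0, and let V : ℝ × ℝ^m → ℝ^m be continuously differentiable. Let γ : ℝ → ℝ^m be a continuously differentiable T-periodic function (γ(t + T) = γ(t) for all t) solving γ′(t) = V(t, γ(t)) for all t. Suppose there are constants a ≥ 0 and b ≥ 0 with a + b < 2π/T such that for every t: ‖∂ₜV(t, γ(t))‖ ≤ a‖γ′(t)‖ and the operator norm of the spatial derivative satisfies ‖D_x V(t, γ(t))‖ ≤ b. Then γ is constant. -/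
open MeasureTheory Set intervalIntegral AddCircle Complex

section helpers

variable {E : Type*} [NormedAddCommGroup E] [NormedSpace ℝ E]

/-- If `φ` is `T`-periodic and has derivative `ψ` everywhere, then `ψ` is `T`-periodic. -/
lemma deriv_of_periodic_periodic {φ ψ : ℝ → E} {T : ℝ} (h : ∀ t, φ (t + T) = φ t)
    (hd : ∀ t, HasDerivAt φ (ψ t) t) (t : ℝ) : ψ (t + T) = ψ t := by
  have h1 : HasDerivAt (fun s => φ (s + T)) (ψ (t + T)) t :=
    HasDerivAt.comp_add_const t T (hd (t + T))
  rw [funext h] at h1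
  exact h1.unique (hd t)

/-- A nonnegative continuous function with vanishing integral over `[0,T]` vanishes there. -/
lemma vanish_of_integral_zero {h : ℝ → ℝ} (hc : Continuous h) (hnn : ∀ x, 0 ≤ h x)
    {T : ℝ} (hT : 0 < T) (hi : (∫ x in (0:ℝ)..T, h x) = 0) :
    ∀ t ∈ Set.Icc (0:ℝ) T, h t = 0 := by
  set F : ℝ → ℝ := fun x => ∫ s in (0:ℝ)..x, h s with hF
  have hFz : ∀ x ∈ Set.Icc (0:ℝ) T, F x = 0 := by
    intro x hx
    have h1 : 0 ≤ F x := intervalIntegral.integral_nonneg hx.1 (fun s _ => hnn s)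
    have h2 : F x + (∫ s in x..T, h s) = ∫ s in (0:ℝ)..T, h s :=
      intervalIntegral.integral_add_adjacent_intervals
        (hc.intervalIntegrable _ _) (hc.intervalIntegrable _ _)
    have h3 : 0 ≤ ∫ s in x..T, h s := intervalIntegral.integral_nonneg hx.2 (fun s _ => hnn s)
    rw [hi] at h2; linarith
  have key : ∀ t ∈ Set.Ioo (0:ℝ) T, h t = 0 := by
    intro t ht
    have hd : HasDerivAt F (h t) t :=
      intervalIntegral.integral_hasDerivAt_right (hc.intervalIntegrable _ _)
        (hc.stronglyMeasurableAtFilter _ _) hc.continuousAt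
    have hev : (fun _ : ℝ => (0:ℝ)) =ᶠ[nhds t] F := by
      filter_upwards [Ioo_mem_nhds ht.1 ht.2] with s hs
      exact (hFz s (Ioo_subset_Icc_self hs)).symm
    have hd0 : HasDerivAt (fun _ : ℝ => (0:ℝ)) (h t) t := hd.congr_of_eventuallyEq hev
    exact ((hasDerivAt_const t (0:ℝ)).unique hd0).symm
  intro t ht
  have : Set.EqOn h 0 (closure (Set.Ioo (0:ℝ) T)) :=
    Set.EqOn.closure (fun s hs => key s hs) hc continuous_const
  rw [closure_Ioo hT.ne] at this
  exact this ht

end helpers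

section wirtinger

variable {T : ℝ}

lemma periodic_lift_eq_liftIoc [hT : Fact (0 < T)] {h : ℝ → ℂ} (hp : Function.Periodic h T) :
    hp.lift = AddCircle.liftIoc T 0 h := by
  funext z
  have hz : (((AddCircle.equivIoc T 0 z : ℝ)) : AddCircle T) = z :=
    (AddCircle.equivIoc T 0).symm_apply_apply z
  calc hp.lift z = hp.lift (((AddCircle.equivIoc T 0 z : ℝ)) : AddCircle T) := by rw [hz]
    _ = h (AddCircle.equivIoc T 0 z : ℝ) := hp.lift_coe _
    _ = AddCircle.liftIoc T 0 h z := rfl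

lemma parseval_periodic [hT : Fact (0 < T)] {h : ℝ → ℂ} (hp : Function.Periodic h T)
    (hc : Continuous h) :
    ∑' n : ℤ, ‖fourierCoeff hp.lift n‖ ^ 2 = (1 / T) * ∫ x in (0:ℝ)..T, ‖h x‖ ^ 2 := by
  have hTpos := hT.out
  let H : C(AddCircle T, ℂ) := ⟨hp.lift, hc.quotient_liftOn' _⟩
  have e1 := tsum_sq_fourierCoeff (ContinuousMap.toLp (E := ℂ) 2 haarAddCircle ℂ H)
  have e0 : ∀ n : ℤ, fourierCoeff ((ContinuousMap.toLp (E := ℂ) 2 haarAddCircle ℂ H : Lp ℂ 2 haarAddCircle) : AddCircle T → ℂ) n = fourierCoeff hp.lift n :=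
    fun n => fourierCoeff_toLp H n
  simp_rw [e0] at e1
  rw [e1]
  have e2 : (∫ t, ‖(ContinuousMap.toLp (E := ℂ) 2 haarAddCircle ℂ H : Lp ℂ 2 haarAddCircle) t‖ ^ 2 ∂haarAddCircle)
      = ∫ t, ‖H t‖ ^ 2 ∂haarAddCircle := by
    apply MeasureTheory.integral_congr_ae
    filter_upwards [ContinuousMap.coeFn_toLp (p := 2) haarAddCircle (𝕜 := ℂ) H] with t ht
    rw [ht]
  rw [e2]
  have e3 : (∫ t, ‖H t‖ ^ 2 ∂(volume : Measure (AddCircle T)))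
      = T * ∫ t, ‖H t‖ ^ 2 ∂haarAddCircle := by
    rw [volume_eq_smul_haarAddCircle, MeasureTheory.integral_smul_measure,
      ENNReal.toReal_ofReal hTpos.le, smul_eq_mul]
  have e4 := AddCircle.intervalIntegral_preimage T 0 (fun z => ‖H z‖ ^ 2)
  have e5 : (∫ x in (0:ℝ)..0 + T, ‖H (x : AddCircle T)‖ ^ 2) = ∫ x in (0:ℝ)..T, ‖h x‖ ^ 2 := by
    rw [zero_add]
    apply intervalIntegral.integral_congr
    intro x _
    show ‖H (x : AddCircle T)‖ ^ 2 = ‖h x‖ ^ 2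
    rw [show H (x : AddCircle T) = h x from hp.lift_coe x]
  rw [e5] at e4
  rw [e4, e3]
  field_simp

end wirtinger

section coeffs

open scoped ENNReal

variable {T : ℝ} [hT : Fact (0 < T)]

open Real in
lemma fourierCoeff_lift_deriv {f g : ℝ → ℂ} (hfp : Function.Periodic f T)
    (hgp : Function.Periodic g T)
    (hfd : ∀ x, HasDerivAt f (g x) x) (hg : Continuous g) {n : ℤ} (hn : n ≠ 0) :
    fourierCoeff hfp.lift n = (T / (2 * π * I * n)) * fourierCoeff hgp.lift n := by
  have hab : (0:ℝ) < 0 + T := lt_add_of_pos_right 0 hT.out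
  have h1 : fourierCoeff hfp.lift n = fourierCoeffOn hab f n := by
    rw [periodic_lift_eq_liftIoc hfp, fourierCoeff_liftIoc_eq]
  have h2 : fourierCoeff hgp.lift n = fourierCoeffOn hab g n := by
    rw [periodic_lift_eq_liftIoc hgp, fourierCoeff_liftIoc_eq]
  rw [h1, h2]
  rw [fourierCoeffOn_of_hasDerivAt hab hn (fun x _ => hfd x) (hg.intervalIntegrable _ _)]
  rw [show f (0 + T) = f 0 from hfp 0]
  have hπ : (π : ℂ) ≠ 0 := Complex.ofReal_ne_zero.mpr Real.pi_ne_zero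
  have hnne : (n : ℂ) ≠ 0 := Int.cast_ne_zero.mpr hn
  have hI : I ≠ 0 := I_ne_zero
  push_cast
  field_simp
  ring

lemma fourierCoeff_lift_zero {f : ℝ → ℂ} (hfp : Function.Periodic f T)
    (hmean : (∫ x in (0:ℝ)..T, f x) = 0) : fourierCoeff hfp.lift 0 = 0 := by
  rw [fourierCoeff_eq_intervalIntegral _ 0 0]
  have : (∫ x in (0:ℝ)..0 + T, (fourier (-0) (x : AddCircle T) : ℂ) • hfp.lift x)
      = ∫ x in (0:ℝ)..T, f x := by
    rw [zero_add]
    apply intervalIntegral.integral_congr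
    intro x _
    show (fourier (-0) (x : AddCircle T) : ℂ) • hfp.lift x = f x
    rw [neg_zero, fourier_zero, hfp.lift_coe, one_smul]
  rw [this, hmean, smul_zero]

lemma summable_sq_fourierCoeff {h : ℝ → ℂ} (hp : Function.Periodic h T) (hc : Continuous h) :
    Summable (fun n : ℤ => ‖fourierCoeff hp.lift n‖ ^ 2) := by
  let H : C(AddCircle T, ℂ) := ⟨hp.lift, hc.quotient_liftOn' _⟩
  have hm := lp.memℓp (fourierBasis.repr (ContinuousMap.toLp (E := ℂ) 2 haarAddCircle ℂ H))
  rw [memℓp_gen_iff (by norm_num)] at hm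
  have : ∀ n : ℤ, ‖(fourierBasis.repr (ContinuousMap.toLp (E := ℂ) 2 haarAddCircle ℂ H)) n‖ ^ (2 : ℝ≥0∞).toReal
      = ‖fourierCoeff hp.lift n‖ ^ 2 := by
    intro n
    rw [fourierBasis_repr, fourierCoeff_toLp]
    rw [show ((2 : ℝ≥0∞).toReal) = ((2:ℕ):ℝ) by norm_num, Real.rpow_natCast]
    rfl
  simpa only [this] using hm

end coeffs

open Real in
/-- **Wirtinger's inequality** for `T`-periodic `ℂ`-valued `C¹` functions with zero mean. -/
lemma wirtinger_aux {T : ℝ} (hT : 0 < T) {f g : ℝ → ℂ}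
    (hfd : ∀ x, HasDerivAt f (g x) x) (hg : Continuous g)
    (hfp : ∀ x, f (x + T) = f x)
    (hmean : (∫ x in (0:ℝ)..T, f x) = 0) :
    (∫ x in (0:ℝ)..T, ‖f x‖ ^ 2) ≤ (T / (2 * π)) ^ 2 * ∫ x in (0:ℝ)..T, ‖g x‖ ^ 2 := by
  haveI : Fact (0 < T) := ⟨hT⟩
  have hf : Continuous f := by
    rw [continuous_iff_continuousAt]; exact fun x => (hfd x).continuousAt
  have hfp' : Function.Periodic f T := hfp
  have hgp' : Function.Periodic g T := deriv_of_periodic_periodic hfp hfd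
  have hπ : (0:ℝ) < 2 * π := by positivity
  -- pointwise coefficient bound
  have bound : ∀ n : ℤ, ‖fourierCoeff hfp'.lift n‖ ^ 2
      ≤ (T / (2 * π)) ^ 2 * ‖fourierCoeff hgp'.lift n‖ ^ 2 := by
    intro n
    rcases eq_or_ne n 0 with rfl | hn
    · rw [fourierCoeff_lift_zero hfp' hmean]
      rw [norm_zero, show ((0:ℝ))^2 = 0 by norm_num]
      positivity
    · rw [fourierCoeff_lift_deriv hfp' hgp' hfd hg hn]
      rw [norm_mul, mul_pow]
      have h1 : ‖(T : ℂ) / (2 * (π:ℂ) * I * n)‖ = T / (2 * π * |(n:ℝ)|) := by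
        rw [norm_div]
        simp [Complex.norm_real, abs_of_pos hT, abs_of_pos Real.pi_pos]
      rw [h1]
      have hn1 : (1:ℝ) ≤ |(n:ℝ)| := by
        rw [← Int.cast_abs]
        exact_mod_cast Int.one_le_abs hn
      have h2 : T / (2 * π * |(n:ℝ)|) ≤ T / (2 * π) := by
        apply div_le_div_of_nonneg_left hT.le hπ
        nlinarith
      have h3 : (0:ℝ) ≤ T / (2 * π * |(n:ℝ)|) := by positivity
      have := mul_self_le_mul_self h3 h2
      nlinarith [sq_nonneg ‖fourierCoeff hgp'.lift n‖, norm_nonneg (fourierCoeff hgp'.lift n)]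
  have sumF := summable_sq_fourierCoeff hfp' hf
  have sumG := summable_sq_fourierCoeff hgp' hg
  have tsum_le : ∑' n : ℤ, ‖fourierCoeff hfp'.lift n‖ ^ 2
      ≤ ∑' n : ℤ, (T / (2 * π)) ^ 2 * ‖fourierCoeff hgp'.lift n‖ ^ 2 :=
    Summable.tsum_le_tsum bound sumF (sumG.mul_left _)
  rw [tsum_mul_left] at tsum_le
  rw [parseval_periodic hfp' hf, parseval_periodic hgp' hg] at tsum_le
  have hTinv : (0:ℝ) < 1 / T := by positivity
  calc (∫ x in (0:ℝ)..T, ‖f x‖ ^ 2)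
      = T * ((1 / T) * ∫ x in (0:ℝ)..T, ‖f x‖ ^ 2) := by field_simp
    _ ≤ T * ((T / (2 * π)) ^ 2 * ((1 / T) * ∫ x in (0:ℝ)..T, ‖g x‖ ^ 2)) := by
        apply mul_le_mul_of_nonneg_left tsum_le hT.le
    _ = (T / (2 * π)) ^ 2 * ∫ x in (0:ℝ)..T, ‖g x‖ ^ 2 := by field_simp

/-- **Rigidity of fast periodic orbits** (the Wirtinger-inequality argument).
A `T`-periodic `C¹` solution `γ` of `γ′(t) = V(t, γ(t))` is constant provided that
along `γ` the time derivative of `V` is bounded by `a‖γ′‖`, the spatial derivative of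
`V` is bounded by `b`, and `a + b < 2π/T`. -/
theorem fast_periodic_orbit_constant
    (m : ℕ) (hm : 1 ≤ m) (T : ℝ) (hT : 0 < T)
    (V : ℝ → EuclideanSpace ℝ (Fin m) → EuclideanSpace ℝ (Fin m))
    (hV : ContDiff ℝ 1 (fun p : ℝ × EuclideanSpace ℝ (Fin m) => V p.1 p.2))
    (γ : ℝ → EuclideanSpace ℝ (Fin m))
    (hγ : ContDiff ℝ 1 γ)
    (hper : ∀ t, γ (t + T) = γ t)
    (hode : ∀ t, HasDerivAt γ (V t (γ t)) t)
    (a b : ℝ) (ha : 0 ≤ a) (hb : 0 ≤ b) (hab : a + b < 2 * Real.pi / T)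
    (hta : ∀ t, ‖deriv (fun s => V s (γ t)) t‖ ≤ a * ‖deriv γ t‖)
    (hxb : ∀ t, ‖fderiv ℝ (V t) (γ t)‖ ≤ b) :
    ∀ s t, γ s = γ t := by
  set π := Real.pi
  let Vu : ℝ × EuclideanSpace ℝ (Fin m) → EuclideanSpace ℝ (Fin m) := fun p => V p.1 p.2
  let u : ℝ → EuclideanSpace ℝ (Fin m) := fun t => V t (γ t)
  have hu : ∀ t, HasDerivAt γ (u t) t := hode
  have hderiv : ∀ t, deriv γ t = u t := fun t => (hode t).deriv
  have hVd : Differentiable ℝ Vu := hV.differentiable one_ne_zero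
  have hcu : Continuous u := hV.continuous.comp (continuous_id.prodMk (hγ.continuous))
  have hprod : ∀ t, HasDerivAt (fun s => (s, γ s)) ((1:ℝ), u t) t := fun t =>
    (hasDerivAt_id t).prodMk (hode t)
  let w : ℝ → EuclideanSpace ℝ (Fin m) := fun t => fderiv ℝ Vu (t, γ t) (1, u t)
  have huw : ∀ t, HasDerivAt u (w t) t := by
    intro t
    have := (hVd (t, γ t)).hasFDerivAt.comp_hasDerivAt t (hprod t)
    exact this
  have hcw : Continuous w := by
    have h1 : Continuous fun t => fderiv ℝ Vu (t, γ t) :=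
      (hV.continuous_fderiv one_ne_zero).comp (continuous_id.prodMk hγ.continuous)
    exact h1.clm_apply (continuous_const.prodMk hcu)
  -- pointwise bound on `w`
  have hwb : ∀ t, ‖w t‖ ≤ (a + b) * ‖u t‖ := by
    intro t
    have hDF := (hVd (t, γ t)).hasFDerivAt
    set DF := fderiv ℝ Vu (t, γ t) with hDFdef
    have e1 : HasDerivAt (fun s => V s (γ t)) (DF ((1:ℝ), (0 : EuclideanSpace ℝ (Fin m)))) t := by
      have hp : HasDerivAt (fun s : ℝ => (s, γ t)) ((1:ℝ), (0 : EuclideanSpace ℝ (Fin m))) t :=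
        (hasDerivAt_id t).prodMk (hasDerivAt_const t (γ t))
      exact hDF.comp_hasDerivAt t hp
    have e1' : ‖DF ((1:ℝ), (0 : EuclideanSpace ℝ (Fin m)))‖ ≤ a * ‖u t‖ := by
      have := hta t
      rw [e1.deriv, hderiv t] at this
      exact this
    have e2 : fderiv ℝ (V t) (γ t)
        = DF.comp (ContinuousLinearMap.inr ℝ ℝ (EuclideanSpace ℝ (Fin m))) := by
      have hp : HasFDerivAt (fun x : EuclideanSpace ℝ (Fin m) => (t, x))
          (ContinuousLinearMap.inr ℝ ℝ (EuclideanSpace ℝ (Fin m))) (γ t) :=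
        (hasFDerivAt_const t (γ t)).prodMk (hasFDerivAt_id (γ t))
      exact (hDF.comp (γ t) hp).fderiv
    have e2' : ‖DF ((0:ℝ), u t)‖ ≤ b * ‖u t‖ := by
      have h3 : DF ((0:ℝ), u t) = fderiv ℝ (V t) (γ t) (u t) := by
        rw [e2]; rfl
      rw [h3]
      calc ‖fderiv ℝ (V t) (γ t) (u t)‖ ≤ ‖fderiv ℝ (V t) (γ t)‖ * ‖u t‖ :=
            (fderiv ℝ (V t) (γ t)).le_opNorm (u t)
        _ ≤ b * ‖u t‖ := mul_le_mul_of_nonneg_right (hxb t) (norm_nonneg _)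
    have split : w t = DF ((1:ℝ), (0 : EuclideanSpace ℝ (Fin m))) + DF ((0:ℝ), u t) := by
      rw [← map_add]
      show DF ((1:ℝ), u t) = _
      congr 1
      simp [Prod.ext_iff]
    calc ‖w t‖ ≤ ‖DF ((1:ℝ), (0 : EuclideanSpace ℝ (Fin m)))‖ + ‖DF ((0:ℝ), u t)‖ := by
          rw [split]; exact norm_add_le _ _
      _ ≤ a * ‖u t‖ + b * ‖u t‖ := add_le_add e1' e2'
      _ = (a + b) * ‖u t‖ := by ring
  -- periodicity and zero mean
  have hup : ∀ t, u (t + T) = u t := deriv_of_periodic_periodic hper hode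
  have hwp : ∀ t, w (t + T) = w t := deriv_of_periodic_periodic hup huw
  have hmeanu : (∫ t in (0:ℝ)..T, u t) = 0 := by
    rw [intervalIntegral.integral_eq_sub_of_hasDerivAt (fun t _ => hode t)
      (hcu.intervalIntegrable 0 T)]
    have := hper 0
    rw [zero_add] at this
    rw [this, sub_self]
  -- componentwise Wirtinger
  let L : Fin m → (EuclideanSpace ℝ (Fin m) →L[ℝ] ℂ) := fun i =>
    Complex.ofRealCLM.comp (EuclideanSpace.proj (𝕜 := ℝ) i)
  have hLnorm : ∀ (i : Fin m) (x : EuclideanSpace ℝ (Fin m)), ‖L i x‖ = ‖x i‖ := by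
    intro i x; simp [L]
  have hnorm_sq : ∀ x : EuclideanSpace ℝ (Fin m), ‖x‖ ^ 2 = ∑ i, ‖x i‖ ^ 2 := by
    intro x
    rw [EuclideanSpace.norm_eq]
    rw [Real.sq_sqrt (Finset.sum_nonneg fun i _ => sq_nonneg _)]
  have wineq : ∀ i : Fin m, (∫ t in (0:ℝ)..T, ‖L i (u t)‖ ^ 2)
      ≤ (T / (2 * π)) ^ 2 * ∫ t in (0:ℝ)..T, ‖L i (w t)‖ ^ 2 := by
    intro i
    apply wirtinger_aux hT
    · intro x
      exact (L i).hasFDerivAt.comp_hasDerivAt x (huw x)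
    · exact (L i).continuous.comp hcw
    · intro x; show L i (u (x + T)) = L i (u x); rw [hup x]
    · rw [(L i).intervalIntegral_comp_comm (hcu.intervalIntegrable _ _), hmeanu, map_zero]
  have sum_u : (∫ t in (0:ℝ)..T, ‖u t‖ ^ 2) = ∑ i, ∫ t in (0:ℝ)..T, ‖L i (u t)‖ ^ 2 := by
    rw [← intervalIntegral.integral_finset_sum]
    · apply intervalIntegral.integral_congr
      intro t _
      simp only [hLnorm]
      exact hnorm_sq (u t)
    · intro i _
      exact (((L i).continuous.comp hcu).norm.pow 2).intervalIntegrable _ _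
  have sum_w : (∫ t in (0:ℝ)..T, ‖w t‖ ^ 2) = ∑ i, ∫ t in (0:ℝ)..T, ‖L i (w t)‖ ^ 2 := by
    rw [← intervalIntegral.integral_finset_sum]
    · apply intervalIntegral.integral_congr
      intro t _
      simp only [hLnorm]
      exact hnorm_sq (w t)
    · intro i _
      exact (((L i).continuous.comp hcw).norm.pow 2).intervalIntegrable _ _
  have main_ineq : (∫ t in (0:ℝ)..T, ‖u t‖ ^ 2)
      ≤ (T / (2 * π)) ^ 2 * ∫ t in (0:ℝ)..T, ‖w t‖ ^ 2 := by
    rw [sum_u, sum_w, Finset.mul_sum]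
    exact Finset.sum_le_sum fun i _ => wineq i
  have w_le_u : (∫ t in (0:ℝ)..T, ‖w t‖ ^ 2)
      ≤ (a + b) ^ 2 * ∫ t in (0:ℝ)..T, ‖u t‖ ^ 2 := by
    rw [← intervalIntegral.integral_const_mul]
    apply intervalIntegral.integral_mono_on hT.le
      ((hcw.norm.pow 2).intervalIntegrable _ _)
      ((continuous_const.mul (hcu.norm.pow 2)).intervalIntegrable _ _)
    intro t _
    have h1 := hwb t
    show ‖w t‖ ^ 2 ≤ (a + b) ^ 2 * ‖u t‖ ^ 2
    nlinarith [norm_nonneg (w t), norm_nonneg (u t)]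
  -- conclude the integral vanishes
  have hI0 : (∫ t in (0:ℝ)..T, ‖u t‖ ^ 2) = 0 := by
    set I := ∫ t in (0:ℝ)..T, ‖u t‖ ^ 2 with hI
    have hInn : 0 ≤ I := intervalIntegral.integral_nonneg hT.le fun t _ => sq_nonneg _
    have hk : (T / (2 * π)) * (a + b) < 1 := by
      have hπ : (0:ℝ) < 2 * π := by positivity
      rw [div_mul_eq_mul_div, div_lt_one hπ]
      calc T * (a + b) < T * (2 * π / T) := by
            apply mul_lt_mul_of_pos_left hab hT
        _ = 2 * π := by field_simp
      -- note : hab is `a + b < 2 * Real.pi / T`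
    have hk0 : 0 ≤ (T / (2 * π)) * (a + b) := by positivity
    have chain : I ≤ ((T / (2 * π)) * (a + b)) ^ 2 * I := by
      calc I ≤ (T / (2 * π)) ^ 2 * ∫ t in (0:ℝ)..T, ‖w t‖ ^ 2 := main_ineq
        _ ≤ (T / (2 * π)) ^ 2 * ((a + b) ^ 2 * I) := by
            apply mul_le_mul_of_nonneg_left w_le_u (by positivity)
        _ = ((T / (2 * π)) * (a + b)) ^ 2 * I := by ring
    have hk2 : ((T / (2 * π)) * (a + b)) ^ 2 < 1 := by nlinarith
    nlinarith
  have huIcc : ∀ t ∈ Set.Icc (0:ℝ) T, u t = 0 := by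
    have := vanish_of_integral_zero (hcu.norm.pow 2) (fun t => sq_nonneg _) hT hI0
    intro t ht
    have h2 := this t ht
    change ‖u t‖ ^ 2 = 0 at h2
    rwa [pow_eq_zero_iff (two_ne_zero), norm_eq_zero] at h2
  have hup' : Function.Periodic u T := hup
  have huzero : ∀ t, u t = 0 := by
    intro t
    have h1 : u t = u (t - (⌊t / T⌋ : ℤ) * T) := (hup'.sub_int_mul_eq ⌊t / T⌋).symm
    rw [h1]
    apply huIcc
    constructor
    · exact Int.sub_floor_div_mul_nonneg t hT
    · exact (Int.sub_floor_div_mul_lt t hT).le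
  intro s t
  exact is_const_of_deriv_eq_zero (hγ.differentiable one_ne_zero)
    (fun x => by rw [hderiv x, huzero x]) s t
end

section
/- (Uniform isolation of constant periodic orbits; the key step in the proof of the paper's Lemma 3.1.) Let m ≥ 1, T > 0, let U ⊆ ℝ^m be open, let W : U → ℝ^m be continuous, and let V : ℝ × U → ℝ^m be continuously differentiable and T-periodic in the time variable. Suppose there are constants 0 ≤ ε < 1 and b ≥ 0 with T·(ε(1−ε)⁻¹ + b) < 2π such that for all t ∈ ℝ and x ∈ U: ‖V(t,x) − W(x)‖ ≤ ε‖W(x)‖, ‖∂ₜV(t,x)‖ ≤ ε‖W(x)‖, and ‖D_xV(t,x)‖ ≤ b. Then every continuously differentiable T-periodic solution γ : ℝ → U of γ′(t) = V(t, γ(t)) is constant, and its value is a zero of W, i.e. W(γ(0)) = 0. In particular, if p is the only zero of W in U, then the constant map at p is the only T-periodic solution of the equation with image in U. -/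
open intervalIntegral Real MeasureTheory Set Filter Topology

lemma wirtinger_dirichlet (L : ℝ) (hL : 0 < L) (h h' : ℝ → ℝ)
    (hd : ∀ t, HasDerivAt h (h' t) t) (hc : Continuous h')
    (h0 : h 0 = 0) (hL0 : h L = 0) :
    ∫ t in (0:ℝ)..L, (h t)^2 ≤ (L/π)^2 * ∫ t in (0:ℝ)..L, (h' t)^2 := by
  have hh : Continuous h := Differentiable.continuous fun t => (hd t).differentiableAt
  have hπ := Real.pi_pos
  set k : ℝ := π / L with hk_def
  have hk : 0 < k := div_pos hπ hL
  have hkL : k * L = π := div_mul_cancel₀ _ hL.ne'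
  set g : ℝ → ℝ := fun t => (h' t)^2 - k^2 * (h t)^2 with hg_def
  have hgc : Continuous g := by fun_prop
  set A : ℝ := ∫ t in (0:ℝ)..L, g t with hA_def
  obtain ⟨M, hM⟩ : ∃ M, ∀ x ∈ Icc (0:ℝ) L, ‖h' x‖ ≤ M :=
    (isCompact_Icc).exists_bound_of_continuousOn hc.continuousOn
  have hM0 : 0 ≤ M := le_trans (norm_nonneg _) (hM 0 ⟨le_refl _, hL.le⟩)
  obtain ⟨Mg, hMg⟩ : ∃ Mg, ∀ x ∈ Icc (0:ℝ) L, ‖g x‖ ≤ Mg :=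
    (isCompact_Icc).exists_bound_of_continuousOn hgc.continuousOn
  have hMg0 : 0 ≤ Mg := le_trans (norm_nonneg _) (hMg 0 ⟨le_refl _, hL.le⟩)
  -- h is small near the two endpoints
  have hsmall0 : ∀ δ : ℝ, 0 < δ → δ ≤ L → |h δ| ≤ M * δ := by
    intro δ hδ hδL
    have he : h δ = ∫ t in (0:ℝ)..δ, h' t := by
      rw [integral_eq_sub_of_hasDerivAt (fun t _ => hd t) (hc.intervalIntegrable _ _), h0,
        sub_zero]
    rw [he, ← Real.norm_eq_abs]
    calc ‖∫ t in (0:ℝ)..δ, h' t‖ ≤ M * |δ - 0| := by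
          apply intervalIntegral.norm_integral_le_of_norm_le_const
          intro x hx
          rw [Set.uIoc_of_le hδ.le] at hx
          exact hM x ⟨hx.1.le, hx.2.trans hδL⟩
      _ = M * δ := by rw [sub_zero, abs_of_pos hδ]
  have hsmallL : ∀ δ : ℝ, 0 < δ → δ ≤ L → |h (L - δ)| ≤ M * δ := by
    intro δ hδ hδL
    have he : h (L - δ) = -∫ t in (L-δ)..L, h' t := by
      rw [integral_eq_sub_of_hasDerivAt (fun t _ => hd t) (hc.intervalIntegrable _ _), hL0,
        zero_sub, neg_neg]
    rw [he, ← Real.norm_eq_abs, norm_neg]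
    calc ‖∫ t in (L-δ)..L, h' t‖ ≤ M * |L - (L - δ)| := by
          apply intervalIntegral.norm_integral_le_of_norm_le_const
          intro x hx
          rw [Set.uIoc_of_le (by linarith)] at hx
          exact hM x ⟨by linarith [hx.1], hx.2⟩
      _ = M * δ := by rw [show L - (L - δ) = δ by ring, abs_of_pos hδ]
  -- the cotangent-type comparison function
  set c : ℝ → ℝ := fun t => Real.cos (k*t) / Real.sin (k*t) with hc_def
  set w : ℝ → ℝ := fun t => k * ((h t)^2 * c t) with hw_def
  have hsin : ∀ t : ℝ, 0 < t → t < L → 0 < Real.sin (k * t) := by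
    intro t h1 h2
    apply Real.sin_pos_of_pos_of_lt_pi (by positivity)
    calc k * t < k * L := by nlinarith
      _ = π := hkL
  -- derivative of c
  have hcd : ∀ t : ℝ, 0 < t → t < L → HasDerivAt c (-k * (1 + (c t)^2)) t := by
    intro t h1 h2
    have hs := hsin t h1 h2
    have dk : HasDerivAt (fun s : ℝ => k * s) k t := by
      simpa using (hasDerivAt_id t).const_mul k
    have hdiv := (dk.cos.div dk.sin hs.ne')
    refine hdiv.congr_deriv (Eq.symm ?_)
    have hpyth := Real.sin_sq_add_cos_sq (k*t)
    simp only [hc_def]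
    field_simp
    linear_combination (0:ℝ) * hpyth
  -- the derivative identity for w
  have hwd : ∀ t : ℝ, 0 < t → t < L →
      HasDerivAt w (g t - (h' t - k * h t * c t)^2) t := by
    intro t h1 h2
    have dsq : HasDerivAt (fun s => (h s)^2) (2 * h t * h' t) t := by
      simpa [mul_comm, mul_assoc] using ((hd t).fun_pow 2)
    have hder := ((dsq.mul (hcd t h1 h2)).const_mul k)
    refine hder.congr_deriv (Eq.symm ?_)
    simp only [hg_def]
    ring
  have hIoo : Ioo (0:ℝ) (L/2) ∈ 𝓝[>] (0:ℝ) :=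
    Ioo_mem_nhdsGT_of_mem ⟨le_refl _, by linarith⟩
  set B : ℝ → ℝ := fun δ => w (L - δ) - w δ with hB_def
  set Φ : ℝ → ℝ := fun δ => ∫ t in δ..(L-δ), g t with hΦ_def
  -- the regularized inequality
  have hBΦ : ∀ δ ∈ Ioo (0:ℝ) (L/2), B δ ≤ Φ δ := by
    intro δ hδ
    obtain ⟨hδ0, hδ2⟩ := hδ
    have hδle : δ ≤ L - δ := by linarith
    have hmemIoo : ∀ t ∈ uIcc δ (L-δ), 0 < t ∧ t < L := by
      intro t ht
      rw [uIcc_of_le hδle] at ht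
      exact ⟨lt_of_lt_of_le hδ0 ht.1, by linarith [ht.2]⟩
    have hccont : ContinuousOn c (uIcc δ (L-δ)) := fun t ht =>
      ((hcd t (hmemIoo t ht).1 (hmemIoo t ht).2).differentiableAt).continuousAt.continuousWithinAt
    have hsqcont : ContinuousOn (fun t => (h' t - k * h t * c t)^2) (uIcc δ (L-δ)) :=
      ((hc.continuousOn.sub ((continuousOn_const.mul hh.continuousOn).mul hccont)).pow 2)
    have hint : ∀ t ∈ uIcc δ (L-δ), HasDerivAt w (g t - (h' t - k * h t * c t)^2) t :=
      fun t ht => hwd t (hmemIoo t ht).1 (hmemIoo t ht).2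
    have hInt2 : IntervalIntegrable (fun t => g t - (h' t - k * h t * c t)^2) volume δ (L-δ) :=
      (hgc.continuousOn.sub hsqcont).intervalIntegrable
    have hftc : ∫ t in δ..(L-δ), (g t - (h' t - k*h t*c t)^2) = w (L-δ) - w δ :=
      integral_eq_sub_of_hasDerivAt hint hInt2
    have hsplit : ∫ t in δ..(L-δ), (g t - (h' t - k*h t*c t)^2)
        = Φ δ - ∫ t in δ..(L-δ), (h' t - k*h t*c t)^2 :=
      integral_sub (hgc.intervalIntegrable _ _) (hsqcont.intervalIntegrable)
    have hnn : 0 ≤ ∫ t in δ..(L-δ), (h' t - k*h t*c t)^2 :=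
      integral_nonneg hδle (fun t _ => sq_nonneg _)
    simp only [hB_def]
    linarith [hftc, hsplit, hnn]
  -- bound on the boundary term
  have hcbound : ∀ δ : ℝ, 0 < δ → δ < L/2 → ‖B δ‖ ≤ (π * M^2) * δ := by
    intro δ hδ0 hδ2
    have hδL : δ ≤ L := by linarith
    have hkδ : 0 < k*δ := by positivity
    have hkδ2 : k*δ ≤ π/2 := by nlinarith
    have hsinlb : 2/π * (k*δ) ≤ Real.sin (k*δ) := Real.mul_le_sin hkδ.le hkδ2
    have hsinpos : 0 < Real.sin (k*δ) := lt_of_lt_of_le (by positivity) hsinlb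
    have hsym : Real.sin (k*(L-δ)) = Real.sin (k*δ) := by
      rw [show k*(L-δ) = π - k*δ by rw [mul_sub, hkL]]
      exact Real.sin_pi_sub _
    have hcb : ∀ s : ℝ, Real.sin (k*s) = Real.sin (k*δ) → |c s| ≤ π/(2*(k*δ)) := by
      intro s hs
      simp only [hc_def]
      rw [abs_div, hs, abs_of_pos hsinpos]
      calc |Real.cos (k*s)| / Real.sin (k*δ) ≤ 1 / Real.sin (k*δ) := by
            gcongr
            exact Real.abs_cos_le_one _
        _ ≤ π/(2*(k*δ)) := by
            rw [div_le_div_iff₀ hsinpos (by positivity)]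
            calc 1 * (2*(k*δ)) = π * (2/π*(k*δ)) := by field_simp
              _ ≤ π * Real.sin (k*δ) := by nlinarith
    have hwb : ∀ s : ℝ, |h s| ≤ M*δ → |c s| ≤ π/(2*(k*δ)) → |w s| ≤ (π * M^2 / 2) * δ := by
      intro s hhs hcs
      have h2 : (h s)^2 ≤ (M*δ)^2 := by nlinarith [abs_nonneg (h s), sq_abs (h s)]
      have hcnn : (0:ℝ) ≤ |c s| := abs_nonneg _
      calc |w s| = k * ((h s)^2 * |c s|) := by
            simp only [hw_def]
            rw [abs_mul, abs_mul, abs_of_pos hk, abs_of_nonneg (sq_nonneg (h s))]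
        _ ≤ k * ((M*δ)^2 * (π/(2*(k*δ)))) := by
            gcongr
        _ = (π * M^2 / 2) * δ := by field_simp
    have w1 := hwb δ (hsmall0 δ hδ0 hδL) (hcb δ rfl)
    have w2 := hwb (L-δ) (hsmallL δ hδ0 hδL) (hcb (L-δ) hsym)
    simp only [hB_def, Real.norm_eq_abs]
    calc |w (L-δ) - w δ| ≤ |w (L-δ)| + |w δ| := abs_sub _ _
      _ ≤ (π * M^2 / 2) * δ + (π * M^2 / 2) * δ := add_le_add w2 w1
      _ = (π * M^2) * δ := by ring
  -- limits
  have hBtend : Tendsto B (𝓝[>] (0:ℝ)) (𝓝 0) := by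
    apply squeeze_zero_norm'
    · filter_upwards [hIoo] with δ hδ
      exact hcbound δ hδ.1 hδ.2
    · have hcont : Tendsto (fun δ : ℝ => (π*M^2)*δ) (𝓝 0) (𝓝 ((π*M^2)*0)) :=
        (continuous_const.mul continuous_id).tendsto 0
      simpa using hcont.mono_left nhdsWithin_le_nhds
  have hΦtend : Tendsto Φ (𝓝[>] (0:ℝ)) (𝓝 A) := by
    rw [← tendsto_sub_nhds_zero_iff]
    apply squeeze_zero_norm' (a := fun δ => Mg*δ + Mg*δ)
    · filter_upwards [hIoo] with δ hδ
      obtain ⟨hδ0, hδ2⟩ := hδ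
      have e1 : (∫ t in (0:ℝ)..δ, g t) + (∫ t in δ..(L-δ), g t) = ∫ t in (0:ℝ)..(L-δ), g t :=
        integral_add_adjacent_intervals (hgc.intervalIntegrable _ _) (hgc.intervalIntegrable _ _)
      have e2 : (∫ t in (0:ℝ)..(L-δ), g t) + (∫ t in (L-δ)..L, g t) = A :=
        integral_add_adjacent_intervals (hgc.intervalIntegrable _ _) (hgc.intervalIntegrable _ _)
      have b1 : ‖∫ t in (0:ℝ)..δ, g t‖ ≤ Mg * δ := by
        calc ‖∫ t in (0:ℝ)..δ, g t‖ ≤ Mg * |δ - 0| := by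
              apply intervalIntegral.norm_integral_le_of_norm_le_const
              intro x hx
              rw [Set.uIoc_of_le hδ0.le] at hx
              exact hMg x ⟨hx.1.le, by linarith [hx.2]⟩
          _ = Mg * δ := by rw [sub_zero, abs_of_pos hδ0]
      have b2 : ‖∫ t in (L-δ)..L, g t‖ ≤ Mg * δ := by
        calc ‖∫ t in (L-δ)..L, g t‖ ≤ Mg * |L - (L-δ)| := by
              apply intervalIntegral.norm_integral_le_of_norm_le_const
              intro x hx
              rw [Set.uIoc_of_le (by linarith)] at hx
              exact hMg x ⟨by linarith [hx.1], hx.2⟩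
          _ = Mg * δ := by rw [show L - (L-δ) = δ by ring, abs_of_pos hδ0]
      have heq : Φ δ - A = - (∫ t in (0:ℝ)..δ, g t) - (∫ t in (L-δ)..L, g t) := by
        simp only [hΦ_def]
        linarith [e1, e2]
      rw [heq]
      calc ‖- (∫ t in (0:ℝ)..δ, g t) - (∫ t in (L-δ)..L, g t)‖
          ≤ ‖∫ t in (0:ℝ)..δ, g t‖ + ‖∫ t in (L-δ)..L, g t‖ := by
            apply (norm_sub_le _ _).trans
            rw [norm_neg]
        _ ≤ Mg*δ + Mg*δ := add_le_add b1 b2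
    · have hcont : Tendsto (fun δ : ℝ => Mg*δ + Mg*δ) (𝓝 0) (𝓝 (Mg*0 + Mg*0)) :=
        ((continuous_const.mul continuous_id).add (continuous_const.mul continuous_id)).tendsto 0
      simpa using hcont.mono_left nhdsWithin_le_nhds
  have hA : (0:ℝ) ≤ A := by
    have hev : B ≤ᶠ[𝓝[>] (0:ℝ)] Φ := by
      filter_upwards [hIoo] with δ hδ
      exact hBΦ δ hδ
    exact le_of_tendsto_of_tendsto hBtend hΦtend hev
  have hsub : A = (∫ t in (0:ℝ)..L, (h' t)^2) - k^2 * ∫ t in (0:ℝ)..L, (h t)^2 := by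
    simp only [hA_def, hg_def]
    rw [integral_sub ((show Continuous fun t => h' t ^ 2 from hc.pow 2).intervalIntegrable _ _)
      ((show Continuous fun t => k ^ 2 * h t ^ 2 from continuous_const.mul (hh.pow 2)).intervalIntegrable _ _), intervalIntegral.integral_const_mul]
  have hLπ : (L/π)^2 = 1/k^2 := by
    rw [hk_def]
    field_simp
  rw [hLπ, one_div, inv_mul_eq_div, le_div_iff₀ (by positivity)]
  nlinarith [hA, hsub]

lemma wirtinger_shift (a L : ℝ) (hL : 0 < L) (h h' : ℝ → ℝ)
    (hd : ∀ t, HasDerivAt h (h' t) t) (hc : Continuous h')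
    (heq : h (a + L) = h a) :
    ∫ t in a..(a+L), (h t - h a)^2 ≤ (L/π)^2 * ∫ t in a..(a+L), (h' t)^2 := by
  have key := wirtinger_dirichlet L hL (fun t => h (a + t) - h a) (fun t => h' (a + t))
    (fun t => by
      have := ((hd (a+t)).comp t ((hasDerivAt_id t).const_add a)).sub_const (h a)
      simpa using this)
    (hc.comp (continuous_const.add continuous_id)) (by simp) (by simp [heq])
  have e1 : ∫ t in (0:ℝ)..L, (h (a + t) - h a)^2 = ∫ t in a..(a+L), (h t - h a)^2 := by
    have := intervalIntegral.integral_comp_add_left (a := (0:ℝ)) (b := L)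
      (fun x => (h x - h a)^2) a
    simpa using this
  have e2 : ∫ t in (0:ℝ)..L, (h' (a + t))^2 = ∫ t in a..(a+L), (h' t)^2 := by
    have := intervalIntegral.integral_comp_add_left (a := (0:ℝ)) (b := L)
      (fun x => (h' x)^2) a
    simpa using this
  rw [← e1, ← e2]
  exact key

lemma wirtinger_periodic (T : ℝ) (hT : 0 < T) (h h' : ℝ → ℝ)
    (hd : ∀ t, HasDerivAt h (h' t) t) (hc : Continuous h')
    (hper : ∀ t, h (t + T) = h t)
    (hmean : ∫ t in (0:ℝ)..T, h t = 0) :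
    ∫ t in (0:ℝ)..T, (h t)^2 ≤ (T/(2*π))^2 * ∫ t in (0:ℝ)..T, (h' t)^2 := by
  have hh : Continuous h := Differentiable.continuous fun t => (hd t).differentiableAt
  have hπ := Real.pi_pos
  set L : ℝ := T/2 with hL_def
  have hL : 0 < L := by positivity
  -- h' is periodic
  have hper' : ∀ t, h' (t + T) = h' t := by
    intro t
    have k1 : HasDerivAt (fun s => h (s + T)) (h' (t+T)) t := by
      have := (hd (t+T)).comp t ((hasDerivAt_id t).add_const T)
      simpa [Function.comp_def] using this
    have k2 : HasDerivAt (fun s => h (s + T)) (h' t) t := by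
      have : (fun s => h (s + T)) = h := funext hper
      rw [this]; exact hd t
    exact k1.unique k2
  -- find a point with h a = h (a + L)
  set G : ℝ → ℝ := fun t => h t - h (t + L) with hG_def
  have hGc : Continuous G := by
    apply hh.sub (hh.comp (continuous_id.add continuous_const))
  have hGsum : G (T/2) = - G 0 := by
    simp only [hG_def]
    have : h (T/2 + L) = h 0 := by
      rw [show T/2 + L = 0 + T by rw [hL_def]; ring, hper 0]
    rw [this]
    simp only [zero_add, hL_def]; ring
  obtain ⟨a, _, hGa⟩ : ∃ a ∈ uIcc (0:ℝ) (T/2), G a = 0 := by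
    have hmem : (0:ℝ) ∈ uIcc (G 0) (G (T/2)) := by
      rw [hGsum, Set.mem_uIcc]
      rcases le_total (G 0) 0 with hle | hle
      · left; constructor <;> linarith
      · right; constructor <;> linarith
    obtain ⟨a, ha, hae⟩ := intermediate_value_uIcc (hGc.continuousOn) hmem
    exact ⟨a, ha, hae⟩
  have haL : h (a + L) = h a := by
    have : h a - h (a + L) = 0 := hGa
    linarith
  have haT : h (a + T) = h a := hper a
  -- two applications of the shifted Wirtinger inequality
  have I1 := wirtinger_shift a L hL h h' hd hc haL
  have I2 := wirtinger_shift (a+L) L hL h h' hd hc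
    (by rw [show a + L + L = a + T by rw [hL_def]; ring, haT, haL])
  rw [haL] at I2
  have hsum2 : ∀ (f : ℝ → ℝ), Continuous f →
      (∫ t in a..(a+L), f t) + (∫ t in (a+L)..(a+L+L), f t) = ∫ t in a..(a+T), f t := by
    intro f hf
    rw [show a + L + L = a + T by rw [hL_def]; ring] at *
    exact integral_add_adjacent_intervals (hf.intervalIntegrable _ _) (hf.intervalIntegrable _ _)
  have hContSq : Continuous fun t => (h t - h a)^2 := by fun_prop
  have hContSq' : Continuous fun t => (h' t)^2 := by fun_prop
  have Isum : ∫ t in a..(a+T), (h t - h a)^2 ≤ (L/π)^2 * ∫ t in a..(a+T), (h' t)^2 := by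
    rw [← hsum2 _ hContSq, ← hsum2 _ hContSq']
    rw [show a + L + L = a + T by rw [hL_def]; ring] at I2 ⊢
    linarith [I1, I2]
  -- transfer to [0, T] by periodicity
  have hperSq : Function.Periodic (fun t => (h t - h a)^2) T := fun x => by simp [hper x]
  have hperSq' : Function.Periodic (fun t => (h' t)^2) T := fun x => by simp [hper' x]
  have e1 : ∫ t in a..(a+T), (h t - h a)^2 = ∫ t in (0:ℝ)..T, (h t - h a)^2 := by
    have := hperSq.intervalIntegral_add_eq a 0
    simpa using this
  have e2 : ∫ t in a..(a+T), (h' t)^2 = ∫ t in (0:ℝ)..T, (h' t)^2 := by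
    have := hperSq'.intervalIntegral_add_eq a 0
    simpa using this
  rw [e1, e2] at Isum
  -- expand the square: mean-zero gives the comparison
  have hexp : ∫ t in (0:ℝ)..T, (h t - h a)^2
      = (∫ t in (0:ℝ)..T, (h t)^2) + (h a)^2 * T := by
    have expand : ∀ t : ℝ, (h t - h a)^2 = (h t)^2 - (2*(h a))*(h t) + (h a)^2 := fun t => by ring
    simp_rw [expand]
    rw [integral_add ((show Continuous fun t => h t ^ 2 - 2 * h a * h t from (hh.pow 2).sub (continuous_const.mul hh)).intervalIntegrable _ _)
      (intervalIntegrable_const),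
      integral_sub ((show Continuous fun t => h t ^ 2 from hh.pow 2).intervalIntegrable _ _)
      ((show Continuous fun t => 2 * h a * h t from continuous_const.mul hh).intervalIntegrable _ _),
      intervalIntegral.integral_const_mul, hmean, intervalIntegral.integral_const]
    simp [mul_comm]
  have hfin : ∫ t in (0:ℝ)..T, (h t)^2 ≤ (L/π)^2 * ∫ t in (0:ℝ)..T, (h' t)^2 := by
    nlinarith [sq_nonneg (h a), hT]
  have he : (L/π)^2 = (T/(2*π))^2 := by rw [hL_def, div_div]
  rw [← he]
  exact hfin

set_option maxHeartbeats 1000000 in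
/-- **Uniform isolation of constant periodic orbits.**  If a `T`-periodic
time-dependent vector field `V` on an open set `U ⊆ ℝ^m` is close to a reference
field `W` in the sense that `‖V − W‖ ≤ ε‖W‖`, `‖∂ₜV‖ ≤ ε‖W‖` and `‖D_xV‖ ≤ b`
with `T(ε(1−ε)⁻¹ + b) < 2π`, then every `T`-periodic `C¹` solution of
`γ′ = V(t, γ)` with image in `U` is constant and its value is a zero of `W`.
In particular, if `p` is the only zero of `W` in `U`, the constant map at `p`
is the only such `T`-periodic solution. -/
theorem constant_periodic_orbits_uniformly_isolated
    (m : ℕ) (hm : 1 ≤ m) (T : ℝ) (hT : 0 < T)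
    (U : Set (EuclideanSpace ℝ (Fin m))) (hU : IsOpen U)
    (W : EuclideanSpace ℝ (Fin m) → EuclideanSpace ℝ (Fin m))
    (hW : ContinuousOn W U)
    (V : ℝ → EuclideanSpace ℝ (Fin m) → EuclideanSpace ℝ (Fin m))
    (hV : ContDiffOn ℝ 1 (fun p : ℝ × EuclideanSpace ℝ (Fin m) => V p.1 p.2)
      (Set.univ ×ˢ U))
    (hVper : ∀ t x, V (t + T) x = V t x)
    (ε b : ℝ) (hε0 : 0 ≤ ε) (hε1 : ε < 1) (hb : 0 ≤ b)
    (hsmall : T * (ε * (1 - ε)⁻¹ + b) < 2 * Real.pi)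
    (h1 : ∀ t : ℝ, ∀ x ∈ U, ‖V t x - W x‖ ≤ ε * ‖W x‖)
    (h2 : ∀ t : ℝ, ∀ x ∈ U, ‖deriv (fun s => V s x) t‖ ≤ ε * ‖W x‖)
    (h3 : ∀ t : ℝ, ∀ x ∈ U, ‖fderiv ℝ (V t) x‖ ≤ b) :
    (∀ γ : ℝ → EuclideanSpace ℝ (Fin m), (∀ t, γ t ∈ U) → ContDiff ℝ 1 γ →
      (∀ t, γ (t + T) = γ t) → (∀ t, HasDerivAt γ (V t (γ t)) t) →
      (∀ s t, γ s = γ t) ∧ W (γ 0) = 0) ∧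
    (∀ p ∈ U, (∀ x ∈ U, W x = 0 → x = p) →
      ∀ γ : ℝ → EuclideanSpace ℝ (Fin m), (∀ t, γ t ∈ U) → ContDiff ℝ 1 γ →
        (∀ t, γ (t + T) = γ t) → (∀ t, HasDerivAt γ (V t (γ t)) t) →
        ∀ t, γ t = p) := by
  have hπ := Real.pi_pos
  have h1ε : (0:ℝ) < 1 - ε := by linarith
  set c : ℝ := ε * (1 - ε)⁻¹ + b with hc_def
  have hc0 : 0 ≤ c := by positivity
  have main : ∀ γ : ℝ → EuclideanSpace ℝ (Fin m), (∀ t, γ t ∈ U) → ContDiff ℝ 1 γ →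
      (∀ t, γ (t + T) = γ t) → (∀ t, HasDerivAt γ (V t (γ t)) t) →
      (∀ s t, γ s = γ t) ∧ W (γ 0) = 0 := by
    intro γ hγU hγC1 hγper hγd
    set f : ℝ → EuclideanSpace ℝ (Fin m) := fun t => V t (γ t) with hf_def
    have hfd : ∀ t, HasDerivAt γ (f t) t := hγd
    set Vu : ℝ × EuclideanSpace ℝ (Fin m) → EuclideanSpace ℝ (Fin m) :=
      fun p => V p.1 p.2 with hVu_def
    have ho : IsOpen ((Set.univ : Set ℝ) ×ˢ U) := isOpen_univ.prod hU
    have hmem : ∀ t : ℝ, ((t, γ t) : ℝ × EuclideanSpace ℝ (Fin m)) ∈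
        (Set.univ : Set ℝ) ×ˢ U := fun t => ⟨trivial, hγU t⟩
    have hdiff : ∀ t : ℝ, HasFDerivAt Vu (fderiv ℝ Vu (t, γ t)) (t, γ t) := by
      intro t
      refine DifferentiableAt.hasFDerivAt ?_
      exact ((hV.differentiableOn one_ne_zero).differentiableAt (ho.mem_nhds (hmem t)))
    set D : ℝ → (ℝ × EuclideanSpace ℝ (Fin m)) →L[ℝ] EuclideanSpace ℝ (Fin m) :=
      fun t => fderiv ℝ Vu (t, γ t) with hD_def
    set f' : ℝ → EuclideanSpace ℝ (Fin m) := fun t => D t (1, f t) with hf'_def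
    have hγc : Continuous γ := hγC1.continuous
    have hcurve : Continuous (fun t : ℝ => ((t, γ t) : ℝ × EuclideanSpace ℝ (Fin m))) :=
      continuous_id.prodMk hγc
    have hfc : Continuous f := by
      have he : f = fun t => Vu (t, γ t) := rfl
      rw [he]
      exact (hV.continuousOn).comp_continuous hcurve hmem
    have hfd' : ∀ t, HasDerivAt f (f' t) t := fun t =>
      by have := (hdiff t).comp_hasDerivAt t ((hasDerivAt_id t).prodMk (hfd t)); exact this
    have hf'c : Continuous f' := by
      have hDc : Continuous D :=
        (hV.continuousOn_fderiv_of_isOpen ho le_rfl).comp_continuous hcurve hmem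
      exact hDc.clm_apply (continuous_const.prodMk hfc)
    have hfper : ∀ t, f (t + T) = f t := by
      intro t
      show V (t + T) (γ (t + T)) = V t (γ t)
      rw [hγper t, hVper t (γ t)]
    -- norm bounds
    have hWf : ∀ t, ‖W (γ t)‖ ≤ (1-ε)⁻¹ * ‖f t‖ := by
      intro t
      have hb1 := h1 t (γ t) (hγU t)
      have htri : ‖W (γ t)‖ - ‖f t‖ ≤ ‖f t - W (γ t)‖ := by
        rw [norm_sub_rev]
        exact norm_sub_norm_le _ _
      have hkey : (1 - ε) * ‖W (γ t)‖ ≤ ‖f t‖ := by nlinarith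
      calc ‖W (γ t)‖ = (1-ε)⁻¹ * ((1-ε) * ‖W (γ t)‖) := by field_simp
        _ ≤ (1-ε)⁻¹ * ‖f t‖ := mul_le_mul_of_nonneg_left hkey (by positivity)
    have hf'b : ∀ t, ‖f' t‖ ≤ c * ‖f t‖ := by
      intro t
      have h₁ : HasDerivAt (fun s : ℝ => ((s, γ t) : ℝ × EuclideanSpace ℝ (Fin m)))
          ((1 : ℝ), (0 : EuclideanSpace ℝ (Fin m))) t :=
        (hasDerivAt_id t).prodMk (hasDerivAt_const t (γ t))
      have hdt : HasDerivAt (fun s => V s (γ t)) ((D t) (1, 0)) t :=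
        by have := (hdiff t).comp_hasDerivAt t h₁; exact this
      have b1 : ‖(D t) (1, 0)‖ ≤ ε * ‖W (γ t)‖ := hdt.deriv ▸ h2 t (γ t) (hγU t)
      have hxt : HasFDerivAt (V t) ((D t).comp (ContinuousLinearMap.inr ℝ ℝ
          (EuclideanSpace ℝ (Fin m)))) (γ t) :=
        (hdiff t).comp (γ t) (hasFDerivAt_prodMk_right t (γ t))
      have b2 : ‖(D t) (0, f t)‖ ≤ b * ‖f t‖ := by
        have hop : ‖(D t).comp (ContinuousLinearMap.inr ℝ ℝ (EuclideanSpace ℝ (Fin m)))‖ ≤ b :=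
          hxt.fderiv ▸ h3 t (γ t) (hγU t)
        calc ‖(D t) (0, f t)‖
            = ‖((D t).comp (ContinuousLinearMap.inr ℝ ℝ (EuclideanSpace ℝ (Fin m)))) (f t)‖ := by
              simp
          _ ≤ ‖(D t).comp (ContinuousLinearMap.inr ℝ ℝ (EuclideanSpace ℝ (Fin m)))‖ * ‖f t‖ :=
              ContinuousLinearMap.le_opNorm _ _
          _ ≤ b * ‖f t‖ := mul_le_mul_of_nonneg_right hop (norm_nonneg _)
      have hsplit : f' t = (D t) (1, 0) + (D t) (0, f t) := by
        show (D t) (1, f t) = _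
        rw [← map_add]
        congr 1
        simp [Prod.mk_add_mk]
      calc ‖f' t‖ ≤ ‖(D t) (1,0)‖ + ‖(D t) (0, f t)‖ := hsplit ▸ norm_add_le _ _
        _ ≤ ε * ‖W (γ t)‖ + b * ‖f t‖ := add_le_add b1 b2
        _ ≤ ε * ((1-ε)⁻¹ * ‖f t‖) + b * ‖f t‖ := by
            have := hWf t
            nlinarith
        _ = c * ‖f t‖ := by rw [hc_def]; ring
    -- coordinatewise Wirtinger
    have hficont : ∀ i : Fin m, Continuous (fun t => f t i) := fun i =>
      (EuclideanSpace.proj (𝕜 := ℝ) i).continuous.comp hfc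
    have hfi'cont : ∀ i : Fin m, Continuous (fun t => f' t i) := fun i =>
      (EuclideanSpace.proj (𝕜 := ℝ) i).continuous.comp hf'c
    have key : ∀ i : Fin m, ∫ t in (0:ℝ)..T, (f t i)^2
        ≤ (T/(2*Real.pi))^2 * ∫ t in (0:ℝ)..T, (f' t i)^2 := by
      intro i
      apply wirtinger_periodic T hT (fun t => f t i) (fun t => f' t i)
      · intro t
        exact (EuclideanSpace.proj (𝕜 := ℝ) i).hasFDerivAt.comp_hasDerivAt t (hfd' t)
      · exact hfi'cont i
      · intro t
        rw [hfper t]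
      · have he : ∫ t in (0:ℝ)..T, f t i = (γ T) i - (γ 0) i := by
          apply integral_eq_sub_of_hasDerivAt
          · intro t _
            exact (EuclideanSpace.proj (𝕜 := ℝ) i).hasFDerivAt.comp_hasDerivAt t (hfd t)
          · exact (hficont i).intervalIntegrable _ _
        rw [he, show γ T = γ 0 from by simpa using hγper 0, sub_self]
    -- sum the coordinates
    have hnormsq : ∀ x : EuclideanSpace ℝ (Fin m), ‖x‖^2 = ∑ i, (x i)^2 := by
      intro x
      rw [EuclideanSpace.norm_eq, Real.sq_sqrt (by positivity)]
      congr 1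
      funext i
      rw [Real.norm_eq_abs, sq_abs]
    have hIf : ∫ t in (0:ℝ)..T, ‖f t‖^2 = ∑ i, ∫ t in (0:ℝ)..T, (f t i)^2 := by
      rw [← intervalIntegral.integral_finset_sum
        (fun i _ => ((show Continuous fun t => (f t i)^2 from (hficont i).pow 2)).intervalIntegrable _ _)]
      apply intervalIntegral.integral_congr
      intro t _
      exact hnormsq (f t)
    have hJf : ∫ t in (0:ℝ)..T, ‖f' t‖^2 = ∑ i, ∫ t in (0:ℝ)..T, (f' t i)^2 := by
      rw [← intervalIntegral.integral_finset_sum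
        (fun i _ => ((show Continuous fun t => (f' t i)^2 from (hfi'cont i).pow 2)).intervalIntegrable _ _)]
      apply intervalIntegral.integral_congr
      intro t _
      exact hnormsq (f' t)
    set I : ℝ := ∫ t in (0:ℝ)..T, ‖f t‖^2 with hI_def
    set J : ℝ := ∫ t in (0:ℝ)..T, ‖f' t‖^2 with hJ_def
    have hIJ : I ≤ (T/(2*Real.pi))^2 * J := by
      rw [hIf, hJf, Finset.mul_sum]
      exact Finset.sum_le_sum (fun i _ => key i)
    have hJI : J ≤ c^2 * I := by
      have step : (∫ t in (0:ℝ)..T, ‖f' t‖^2) ≤ ∫ t in (0:ℝ)..T, c^2 * ‖f t‖^2 := by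
        apply intervalIntegral.integral_mono_on hT.le
          ((show Continuous fun t => ‖f' t‖^2 from (hf'c.norm).pow 2).intervalIntegrable _ _)
          ((show Continuous fun t => c^2 * ‖f t‖^2 from continuous_const.mul ((hfc.norm).pow 2)).intervalIntegrable _ _)
        intro t _
        nlinarith [hf'b t, norm_nonneg (f t), norm_nonneg (f' t)]
      rw [intervalIntegral.integral_const_mul] at step
      exact step
    have hInn : 0 ≤ I := intervalIntegral.integral_nonneg hT.le (fun t _ => sq_nonneg _)
    have hq : (T/(2*Real.pi))^2 * c^2 < 1 := by
      have hTc : T * c < 2 * Real.pi := hsmall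
      have hTc0 : 0 ≤ T * c := by positivity
      have he : (T/(2*Real.pi))^2 * c^2 = (T*c/(2*Real.pi))^2 := by ring
      rw [he]
      apply pow_lt_one₀ (by positivity) ?_ (by norm_num)
      rw [div_lt_one (by positivity)]
      exact hTc
    have hI0 : I = 0 := by
      have h5 : (T/(2*Real.pi))^2 * J ≤ ((T/(2*Real.pi))^2 * c^2) * I := by
        have := mul_le_mul_of_nonneg_left hJI (sq_nonneg (T/(2*Real.pi)))
        nlinarith [this]
      nlinarith [hIJ, h5, hq, hInn]
    -- f vanishes
    have hnormc : Continuous fun t => ‖f t‖^2 := (hfc.norm).pow 2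
    have hIf0 : ∀ t₀ ∈ Set.Ioo (0:ℝ) T, f t₀ = 0 := by
      intro t₀ ht₀
      by_contra hne
      have hpos : 0 < ‖f t₀‖^2 := pow_pos (norm_pos_iff.mpr hne) 2
      have hopen : IsOpen ({t : ℝ | ‖f t₀‖^2/2 < ‖f t‖^2} ∩ Set.Ioo 0 T) :=
        (isOpen_lt continuous_const hnormc).inter isOpen_Ioo
      obtain ⟨δ, hδ0, hball⟩ := Metric.isOpen_iff.1 hopen t₀ ⟨by simpa using by linarith, ht₀⟩
      set r := δ/2 with hr_def
      have hr0 : 0 < r := by positivity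
      have hsubI : ∀ x ∈ Set.Icc (t₀ - r) (t₀ + r),
          x ∈ {t : ℝ | ‖f t₀‖^2/2 < ‖f t‖^2} ∩ Set.Ioo 0 T := by
        intro x hx
        apply hball
        rw [Metric.mem_ball, Real.dist_eq, abs_sub_lt_iff]
        obtain ⟨hx1, hx2⟩ := hx
        simp only [hr_def] at hx1 hx2
        constructor <;> linarith
      have hend1 : t₀ - r ∈ Set.Ioo (0:ℝ) T := (hsubI _ ⟨le_refl _, by linarith⟩).2
      have hend2 : t₀ + r ∈ Set.Ioo (0:ℝ) T := (hsubI _ ⟨by linarith, le_refl _⟩).2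
      have hsplit1 : (∫ t in (0:ℝ)..(t₀-r), ‖f t‖^2) + (∫ t in (t₀-r)..(t₀+r), ‖f t‖^2)
          = ∫ t in (0:ℝ)..(t₀+r), ‖f t‖^2 :=
        integral_add_adjacent_intervals (hnormc.intervalIntegrable _ _)
          (hnormc.intervalIntegrable _ _)
      have hsplit2 : (∫ t in (0:ℝ)..(t₀+r), ‖f t‖^2) + (∫ t in (t₀+r)..T, ‖f t‖^2) = I :=
        integral_add_adjacent_intervals (hnormc.intervalIntegrable _ _)
          (hnormc.intervalIntegrable _ _)
      have hn1 : 0 ≤ ∫ t in (0:ℝ)..(t₀-r), ‖f t‖^2 :=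
        intervalIntegral.integral_nonneg (by linarith [hend1.1]) (fun t _ => sq_nonneg _)
      have hn2 : 0 ≤ ∫ t in (t₀+r)..T, ‖f t‖^2 :=
        intervalIntegral.integral_nonneg (by linarith [hend2.2]) (fun t _ => sq_nonneg _)
      have hmid : 2*r*(‖f t₀‖^2/2) ≤ ∫ t in (t₀-r)..(t₀+r), ‖f t‖^2 := by
        have hconst : ∫ t in (t₀-r)..(t₀+r), (‖f t₀‖^2/2)
            = 2*r*(‖f t₀‖^2/2) := by
          rw [intervalIntegral.integral_const, smul_eq_mul,
            show t₀ + r - (t₀ - r) = 2*r by ring]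
        rw [← hconst]
        apply intervalIntegral.integral_mono_on (by linarith)
          intervalIntegrable_const (hnormc.intervalIntegrable _ _)
        intro x hx
        exact (hsubI x hx).1.le
      have hposmid : 0 < 2*r*(‖f t₀‖^2/2) := by positivity
      linarith [hI0, hsplit1, hsplit2, hn1, hn2, hmid]
    have hIcc : ∀ t ∈ Set.Icc (0:ℝ) T, f t = 0 := by
      have hEq : Set.EqOn f (fun _ => (0:EuclideanSpace ℝ (Fin m))) (Set.Ioo 0 T) :=
        fun t ht => hIf0 t ht
      have hcl := hEq.closure hfc continuous_const
      rw [closure_Ioo hT.ne] at hcl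
      exact fun t ht => hcl ht
    have hfzero : ∀ t, f t = 0 := by
      intro t
      have hp : Function.Periodic f T := hfper
      have h1' : f (t - ⌊t/T⌋*T) = f t := hp.sub_int_mul_eq ⌊t/T⌋
      rw [← h1']
      exact hIcc _ ⟨Int.sub_floor_div_mul_nonneg t hT, (Int.sub_floor_div_mul_lt t hT).le⟩
    have hγconst : ∀ s t, γ s = γ t := by
      have hdiffγ : Differentiable ℝ γ := fun t => (hfd t).differentiableAt
      have hderiv0 : ∀ t, deriv γ t = 0 := fun t => by rw [(hfd t).deriv, hfzero t]
      exact fun s t => is_const_of_deriv_eq_zero hdiffγ hderiv0 s t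
    refine ⟨hγconst, ?_⟩
    have hV0 : V 0 (γ 0) = 0 := hfzero 0
    have hWb := h1 0 (γ 0) (hγU 0)
    rw [hV0, zero_sub, norm_neg] at hWb
    have hW0 : ‖W (γ 0)‖ ≤ 0 := by nlinarith
    simpa using norm_le_zero_iff.mp hW0
  constructor
  · exact main
  · intro p hp huniq γ hγU hγC1 hγper hγd t
    obtain ⟨hconst, hW0⟩ := main γ hγU hγC1 hγper hγd
    rw [hconst t 0]
    exact huniq (γ 0) (hγU 0) hW0
end
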